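/- Let t ∈ ℤ₊^r and let M_{A,t} be a Markov subbasis for t such that π₁(m) ∈ {−1, 0, +1} for every m ∈ M_{A,t}. Then π₁(A⁻¹[t]) is an interval of integers. -/

import Mathlib

open Matrix MvPolynomial

namespace SIS

variable {r d : ℕ}

/-- The integer matrix obtained from a nonnegative-integer matrix. -/
def intMat (A : Matrix (Fin r) (Fin d) ℕ) : Matrix (Fin r) (Fin d) ℤ :=
  fun i j => (A i j : ℤ)

/-- The rational matrix obtained from a nonnegative-integer matrix. -/
def ratMat (A : Matrix (Fin r) (Fin d) ℕ) : Matrix (Fin r) (Fin d) ℚ :=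
  fun i j => (A i j : ℚ)

def natToInt (v : Fin d → ℕ) : Fin d → ℤ := fun i => (v i : ℤ)

/-- `A⁻¹[t]`: nonnegative integer tables with constraint value `t`. -/
def tables (A : Matrix (Fin r) (Fin d) ℕ) (t : Fin r → ℕ) : Set (Fin d → ℕ) :=
  {n | A.mulVec n = t}

/-- `A_ℚ⁻¹[t]`: nonnegative rational points with constraint value `t`. -/
def ratTables (A : Matrix (Fin r) (Fin d) ℕ) (t : Fin r → ℕ) : Set (Fin d → ℚ) :=
  {q | (∀ i, 0 ≤ q i) ∧ (ratMat A).mulVec q = fun i => (t i : ℚ)}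

/-- ker_ℤ(A). -/
def kerZ (A : Matrix (Fin r) (Fin d) ℕ) : Set (Fin d → ℤ) :=
  {m | (intMat A).mulVec m = 0}

/-- The some nonempty subset of the rows of `A` sums to a strictly positive vector. -/
def RowsPos (A : Matrix (Fin r) (Fin d) ℕ) : Prop :=
  ∃ R : Finset (Fin r), R.Nonempty ∧ ∀ j, 0 < ∑ i ∈ R, A i j

/-- `u` and `v` are connected using moves from `M`, staying componentwise nonnegative. -/
def connects (M : Set (Fin d → ℤ)) (u v : Fin d → ℕ) : Prop :=
  ∃ l : List (Fin d → ℤ), (∀ m ∈ l, m ∈ M) ∧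
    natToInt u = natToInt v + l.sum ∧
    ∀ k, k ≤ l.length → ∀ i, 0 ≤ natToInt v i + (l.take k).sum i

/-- A Markov basis for `A`. -/
def IsMarkovBasis (A : Matrix (Fin r) (Fin d) ℕ) (M : Set (Fin d → ℤ)) : Prop :=
  M.Finite ∧ M ⊆ kerZ A ∧
    ∀ u v : Fin d → ℕ, A.mulVec u = A.mulVec v → connects M u v

/-- A Markov subbasis for `A` and the fixed value `t`. -/
def IsMarkovSubbasis (A : Matrix (Fin r) (Fin d) ℕ) (t : Fin r → ℕ)
    (M : Set (Fin d → ℤ)) : Prop :=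
  M.Finite ∧ M ⊆ kerZ A ∧ ∀ u ∈ tables A t, ∀ v ∈ tables A t, connects M u v

/-- A set of (nonnegative) integers is an interval of integers. -/
def IsIntInterval (S : Set ℕ) : Prop :=
  ∀ a ∈ S, ∀ b ∈ S, ∀ c : ℕ, a ≤ c → c ≤ b → c ∈ S

/-- The set of feasible values of cell `i` given that cells `j < i` are fixed to `w j`;
this is the set `π₁(A_{i}⁻¹[t - Σ_{j<i} w_j a_j])` of the paper. -/
def stepSet (A : Matrix (Fin r) (Fin d) ℕ) (t : Fin r → ℕ) (i : Fin d)
    (w : Fin d → ℕ) : Set ℕ :=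
  {c | ∃ n ∈ tables A t, (∀ j, j < i → n j = w j) ∧ n i = c}

/-- The sequential interval property for `A⁻¹[t]`. -/
def SeqIntervalProperty (A : Matrix (Fin r) (Fin d) ℕ) (t : Fin r → ℕ) : Prop :=
  ∀ i : Fin d, ∀ w : Fin d → ℕ, IsIntInterval (stepSet A t i w)

/-- m⁺. -/
def posPart (m : Fin d → ℤ) : Fin d → ℕ := fun i => (m i).toNat

/-- m⁻. -/
def negPart (m : Fin d → ℤ) : Fin d → ℕ := fun i => (-(m i)).toNat

/-- The monomial `x^ν`. -/
noncomputable def monom (ν : Fin d → ℕ) : MvPolynomial (Fin d) ℚ :=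
  MvPolynomial.monomial (Finsupp.equivFunOnFinite.symm ν) 1

/-- The binomial `x^{m⁺} - x^{m⁻}` of a Markov move `m`. -/
noncomputable def moveBinomial (m : Fin d → ℤ) : MvPolynomial (Fin d) ℚ :=
  monom (posPart m) - monom (negPart m)

/-- The toric ideal `I_A`. -/
noncomputable def toricIdeal (A : Matrix (Fin r) (Fin d) ℕ) : Ideal (MvPolynomial (Fin d) ℚ) :=
  Ideal.span {f | ∃ u v : Fin d → ℕ, A.mulVec u = A.mulVec v ∧ f = monom u - monom v}

/-- Lexicographic order on exponent vectors with `x₁ > x₂ > ⋯ > x_d`: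
`μ <lex ν` iff the first nonzero entry of `ν - μ` is positive. -/
def lexLt (μ ν : Fin d →₀ ℕ) : Prop :=
  ∃ i : Fin d, μ i < ν i ∧ ∀ j, j < i → μ j = ν j

/-- `ν` is the lex-leading exponent of `p`. -/
def IsLexLead (p : MvPolynomial (Fin d) ℚ) (ν : Fin d →₀ ℕ) : Prop :=
  ν ∈ p.support ∧ ∀ μ ∈ p.support, μ ≠ ν → lexLt μ ν

/-- `x^νg` divides `x^νf`. -/
def expDivides (νg νf : Fin d →₀ ℕ) : Prop := ∀ i, νg i ≤ νf i

/-- `G` is a lex Gröbner basis for `I` (ordering `x₁ > x₂ > ⋯ > x_d`). -/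
def IsLexGB (G : Set (MvPolynomial (Fin d) ℚ)) (I : Ideal (MvPolynomial (Fin d) ℚ)) : Prop :=
  G.Finite ∧ (∀ g ∈ G, g ≠ 0 ∧ g ∈ I) ∧
    ∀ f ∈ I, f ≠ 0 → ∃ g ∈ G, ∃ νg νf,
      IsLexLead g νg ∧ IsLexLead f νf ∧ expDivides νg νf

/-- Graded reverse lexicographic order with `x_d > x_{d-1} > ⋯ > x₁`:
`μ <grevlex ν` iff deg μ < deg ν, or degrees agree and the first nonzero entry of
`ν - μ` (scanning coordinates `1, 2, …, d`) is negative. -/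
def grevlexLt (μ ν : Fin d →₀ ℕ) : Prop :=
  (∑ i, μ i) < (∑ i, ν i) ∨
    ((∑ i, μ i) = (∑ i, ν i) ∧ ∃ i : Fin d, ν i < μ i ∧ ∀ j, j < i → μ j = ν j)

/-- `ν` is the grevlex-leading exponent of `p`. -/
def IsGrevlexLead (p : MvPolynomial (Fin d) ℚ) (ν : Fin d →₀ ℕ) : Prop :=
  ν ∈ p.support ∧ ∀ μ ∈ p.support, μ ≠ ν → grevlexLt μ ν

/-- `G` is a grevlex Gröbner basis for `I` (ordering `x_d > ⋯ > x₁`). -/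
def IsGrevlexGB (G : Set (MvPolynomial (Fin d) ℚ)) (I : Ideal (MvPolynomial (Fin d) ℚ)) : Prop :=
  G.Finite ∧ (∀ g ∈ G, g ≠ 0 ∧ g ∈ I) ∧
    ∀ f ∈ I, f ≠ 0 → ∃ g ∈ G, ∃ νg νf,
      IsGrevlexLead g νg ∧ IsGrevlexLead f νf ∧ expDivides νg νf

/-- `p` is square-free in `x_i`. -/
def SquareFreeIn (p : MvPolynomial (Fin d) ℚ) (i : Fin d) : Prop :=
  ∀ ν ∈ p.support, ν i ≤ 1

/-- `p` lies in `ℚ[x_i, …, x_d]`. -/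
def OnlyVarsFrom (p : MvPolynomial (Fin d) ℚ) (i : Fin d) : Prop :=
  ∀ ν ∈ p.support, ∀ j, j < i → ν j = 0

/-- The toric ideal `I_{A_j}` of the submatrix of the last columns, viewed inside
`ℚ[x₁, …, x_d]`. -/
noncomputable def toricIdealFrom (A : Matrix (Fin r) (Fin d) ℕ) (j : Fin d) :
    Ideal (MvPolynomial (Fin d) ℚ) :=
  Ideal.span {f | ∃ u v : Fin d → ℕ, (∀ k, k < j → u k = 0) ∧ (∀ k, k < j → v k = 0) ∧
    A.mulVec u = A.mulVec v ∧ f = monom u - monom v}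



lemma discrete_ivt (f : ℕ → ℤ) (c : ℤ) : ∀ N : ℕ,
    (∀ k, k < N → f (k+1) = f k - 1 ∨ f (k+1) = f k ∨ f (k+1) = f k + 1) →
    f N ≤ c → c ≤ f 0 → ∃ k ≤ N, f k = c := by
  intro N
  induction N with
  | zero => intro _ h1 h2; exact ⟨0, le_refl 0, le_antisymm h1 h2⟩
  | succ N ih =>
    intro hstep h1 h2
    by_cases hc : f N ≤ c
    · obtain ⟨k, hk, hfk⟩ := ih (fun k hk => hstep k (by omega)) hc h2
      exact ⟨k, by omega, hfk⟩
    · have := hstep N (by omega)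
      exact ⟨N+1, le_refl _, by omega⟩

lemma mulVec_sum_zero (A : Matrix (Fin r) (Fin d) ℕ) (l : List (Fin d → ℤ))
    (h : ∀ m ∈ l, m ∈ kerZ A) : (intMat A).mulVec l.sum = 0 := by
  induction l with
  | nil => simp [List.sum_nil]
  | cons a l ih =>
    rw [List.sum_cons, Matrix.mulVec_add, h a List.mem_cons_self,
      ih (fun m hm => h m (List.mem_cons_of_mem _ hm))]
    simp

lemma cast_mulVec (A : Matrix (Fin r) (Fin d) ℕ) (n : Fin d → ℕ) :
    (intMat A).mulVec (natToInt n) = fun i => ((A.mulVec n i : ℕ) : ℤ) := by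
  funext i
  simp [Matrix.mulVec, dotProduct, intMat, natToInt]

/-- Lemma 4.1. If a Markov subbasis `M_{A,t}` satisfies
`π₁(M_{A,t}) ⊆ {-1, 0, +1}`, then `π₁(A⁻¹[t])` is an interval of integers. -/
theorem firstCoords_interval_of_markovSubbasis {r d : ℕ} [NeZero d]
    (A : Matrix (Fin r) (Fin d) ℕ) (hA : RowsPos A) (t : Fin r → ℕ)
    (M : Set (Fin d → ℤ)) (hM : IsMarkovSubbasis A t M)
    (hpi : ∀ m ∈ M, m 0 = -1 ∨ m 0 = 0 ∨ m 0 = 1) :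
    IsIntInterval {c : ℕ | ∃ n ∈ tables A t, n 0 = c} := by
  intro a ha b hb c hac hcb
  obtain ⟨u, hu, hu0⟩ := ha
  obtain ⟨v, hv, hv0⟩ := hb
  obtain ⟨l, hlM, hsum, hnonneg⟩ := hM.2.2 u hu v hv
  -- f k = first coordinate of v + partial sum
  set f : ℕ → ℤ := fun k => natToInt v 0 + (l.take k).sum 0 with hf
  have hf0 : f 0 = (b : ℤ) := by simp [hf, natToInt, hv0]
  have hfN : f l.length = (a : ℤ) := by
    have h := congrFun hsum 0
    simp only [Pi.add_apply, natToInt] at h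
    simp only [hf, List.take_length, natToInt, hu0] at h ⊢
    omega
  have hstep : ∀ k, k < l.length → f (k+1) = f k - 1 ∨ f (k+1) = f k ∨ f (k+1) = f k + 1 := by
    intro k hk
    have hts : (l.take (k+1)).sum = (l.take k).sum + l[k] := List.sum_take_succ l k hk
    have hmem : l[k] ∈ M := hlM _ (List.getElem_mem hk)
    have := hpi _ hmem
    have hfs : f (k+1) = f k + l[k] 0 := by
      simp [hf, hts]; ring
    omega
  obtain ⟨k, hkN, hfk⟩ := discrete_ivt f (c : ℤ) l.length hstep
    (by rw [hfN]; exact_mod_cast hac) (by rw [hf0]; exact_mod_cast hcb)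
  -- the intermediate point
  set w : Fin d → ℤ := fun i => natToInt v i + (l.take k).sum i with hw
  have hwnn : ∀ i, 0 ≤ w i := hnonneg k hkN
  set n : Fin d → ℕ := fun i => (w i).toNat with hn
  have hnw : natToInt n = w := by
    funext i; simp [hn, natToInt, Int.toNat_of_nonneg (hwnn i)]
  refine ⟨n, ?_, ?_⟩
  · -- n ∈ tables A t
    have hker : (intMat A).mulVec (l.take k).sum = 0 :=
      mulVec_sum_zero A _ (fun m hm => hM.2.1 (hlM m (List.mem_of_mem_take hm)))
    have hvw : (intMat A).mulVec w = (intMat A).mulVec (natToInt v) := by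
      have : w = natToInt v + (l.take k).sum := by funext i; rfl
      rw [this, Matrix.mulVec_add, hker]; simp
    have hvt : A.mulVec v = t := hv
    have : (fun i => ((A.mulVec n i : ℕ) : ℤ)) = fun i => ((t i : ℕ) : ℤ) := by
      rw [← cast_mulVec, hnw, hvw, cast_mulVec, hvt]
    have := fun i => congrFun this i
    funext i
    exact_mod_cast this i
  · -- n 0 = c
    have : (n 0 : ℤ) = (c : ℤ) := by
      rw [show (n 0 : ℤ) = natToInt n 0 from rfl, hnw]
      exact hfk
    exact_mod_cast this


end SIS
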